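/- Let L be a 2×2 operator matrix function on Ω in H = H₁ ⊕ H₂, let s ∈ {+1, −1}, and let λ ∈ Ω satisfy: λ ∈ σ_ap(L); D(λ) is boundedly invertible; ⟨C(λ)f, v⟩ = s·⟨f, B(λ)v⟩ for all f ∈ dom C(λ) and v ∈ dom B(λ) (i.e. C(λ) ⊆ s·B(λ)*); Re⟨A(λ)f, f⟩ ≥ 0 for all f ∈ dom A(λ) (A(λ) is accretive); there is ψ ∈ [0, π/2) such that Re⟨−s·D(λ)v, v⟩ ≥ 0 and |Im⟨−s·D(λ)v, v⟩| ≤ tan(ψ)·Re⟨−s·D(λ)v, v⟩ for all v ∈ dom D(λ) (−s·D(λ) is sectorial with vertex 0); dom D(λ) ⊆ dom B(λ) and B(λ) is D(λ)-bounded. Then λ ∈ σ_ap(S₁) or 0 ∈ closure{⟨D(λ)v, v⟩ : v ∈ dom D(λ), ‖v‖ = 1}. -/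

import Mathlib

open Filter Topology Real

noncomputable section

variable {H₁ H₂ : Type*}
  [NormedAddCommGroup H₁] [InnerProductSpace ℂ H₁] [CompleteSpace H₁]
  [NormedAddCommGroup H₂] [InnerProductSpace ℂ H₂] [CompleteSpace H₂]

local notation "⟪" x ", " y "⟫" => @inner ℂ _ _ x y

/-- `R` is a bounded, everywhere defined inverse of the partially defined operator `S`. -/
def IsBddInv {K₁ K₂ : Type*} [NormedAddCommGroup K₁] [NormedSpace ℂ K₁]
    [NormedAddCommGroup K₂] [NormedSpace ℂ K₂]
    (S : K₁ →ₗ.[ℂ] K₂) (R : K₂ →L[ℂ] K₁) : Prop :=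
  (∀ v : S.domain, R (S v) = v) ∧ ∀ h : K₂, ∃ hm : R h ∈ S.domain, S ⟨R h, hm⟩ = h

/-- If `λ ∈ σ_ap(L)`, `D(λ)` is boundedly invertible, `C(λ) ⊆ s·B(λ)*` with `s = ±1`,
`A(λ)` is accretive, `−s·D(λ)` is sectorial with vertex `0`, and `B(λ)` is
`D(λ)`-bounded, then `λ ∈ σ_ap(S₁)` or `0 ∈ closure W(D(λ))`. -/
theorem sigmaAp_schur_or_closure_numRange_diag
    (Ω : Set ℂ) (A : ℂ → H₁ →ₗ.[ℂ] H₁) (B : ℂ → H₂ →ₗ.[ℂ] H₁)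
    (C : ℂ → H₁ →ₗ.[ℂ] H₂) (D : ℂ → H₂ →ₗ.[ℂ] H₂)
    (s : ℂ) (hs : s = 1 ∨ s = -1)
    (l : ℂ) (hl : l ∈ Ω)
    (hap : ∃ (f : ℕ → H₁) (g : ℕ → H₂) (hfA : ∀ n, f n ∈ (A l).domain)
      (hfC : ∀ n, f n ∈ (C l).domain) (hgB : ∀ n, g n ∈ (B l).domain)
      (hgD : ∀ n, g n ∈ (D l).domain),
      (∀ n, ‖(WithLp.equiv 2 (H₁ × H₂)).symm (f n, g n)‖ = 1) ∧
      Tendsto (fun n => (WithLp.equiv 2 (H₁ × H₂)).symm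
        ((A l) ⟨f n, hfA n⟩ + (B l) ⟨g n, hgB n⟩,
          (C l) ⟨f n, hfC n⟩ + (D l) ⟨g n, hgD n⟩)) atTop (𝓝 0))
    (RD : H₂ →L[ℂ] H₂) (hRD : IsBddInv (D l) RD)
    (hadj : ∀ (f : H₁) (hf : f ∈ (C l).domain) (v : H₂) (hv : v ∈ (B l).domain),
      ⟪v, (C l) ⟨f, hf⟩⟫ = s * ⟪(B l) ⟨v, hv⟩, f⟫)
    (hacc : ∀ (f : H₁) (hf : f ∈ (A l).domain), 0 ≤ (⟪f, (A l) ⟨f, hf⟩⟫).re)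
    (ψ : ℝ) (hψ0 : 0 ≤ ψ) (hψ1 : ψ < π / 2)
    (hsec : ∀ (v : H₂) (hv : v ∈ (D l).domain),
      0 ≤ (⟪v, (-s) • ((D l) ⟨v, hv⟩)⟫).re ∧
      |(⟪v, (-s) • ((D l) ⟨v, hv⟩)⟫).im| ≤ Real.tan ψ * (⟪v, (-s) • ((D l) ⟨v, hv⟩)⟫).re)
    (hDB : ((D l).domain : Set H₂) ⊆ ((B l).domain : Set H₂))
    (hBbd : ∃ a b : ℝ, 0 ≤ a ∧ 0 ≤ b ∧ ∀ (g : H₂) (hg : g ∈ (D l).domain),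
      ‖(B l) ⟨g, hDB hg⟩‖ ≤ a * ‖g‖ + b * ‖(D l) ⟨g, hg⟩‖) :
    (∃ (f : ℕ → H₁) (hfA : ∀ n, f n ∈ (A l).domain) (hfC : ∀ n, f n ∈ (C l).domain)
      (hB : ∀ n, RD ((C l) ⟨f n, hfC n⟩) ∈ (B l).domain),
      (∀ n, ‖f n‖ = 1) ∧
      Tendsto (fun n => (A l) ⟨f n, hfA n⟩
        - (B l) ⟨RD ((C l) ⟨f n, hfC n⟩), hB n⟩) atTop (𝓝 0)) ∨
    (0 : ℂ) ∈ closure {z : ℂ | ∃ (v : H₂) (hv : v ∈ (D l).domain),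
      ‖v‖ = 1 ∧ z = ⟪v, (D l) ⟨v, hv⟩⟫} := by
  by_cases hW : (0 : ℂ) ∈ closure {z : ℂ | ∃ (v : H₂) (hv : v ∈ (D l).domain),
      ‖v‖ = 1 ∧ z = ⟪v, (D l) ⟨v, hv⟩⟫}
  · exact Or.inr hW
  left
  obtain ⟨f, g, hfA, hfC, hgB, hgD, hnorm, hlim⟩ := hap
  -- components
  set u : ℕ → H₁ := fun n => (A l) ⟨f n, hfA n⟩ + (B l) ⟨g n, hgB n⟩ with hu_def
  set w : ℕ → H₂ := fun n => (C l) ⟨f n, hfC n⟩ + (D l) ⟨g n, hgD n⟩ with hw_def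
  set X : ℕ → WithLp 2 (H₁ × H₂) := fun n => (WithLp.equiv 2 (H₁ × H₂)).symm
      ((A l) ⟨f n, hfA n⟩ + (B l) ⟨g n, hgB n⟩,
        (C l) ⟨f n, hfC n⟩ + (D l) ⟨g n, hgD n⟩) with hX_def
  have hXlim : Tendsto (fun n => ‖X n‖) atTop (𝓝 0) := by
    simpa using (tendsto_zero_iff_norm_tendsto_zero.mp hlim)
  have huX : ∀ n, ‖u n‖ ≤ ‖X n‖ := by
    intro n
    have h := WithLp.prod_norm_sq_eq_of_L2 (X n)
    have h1 : (X n).fst = u n := rfl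
    have h2 : (X n).snd = w n := rfl
    rw [h1, h2] at h
    nlinarith [norm_nonneg (u n), norm_nonneg (w n), norm_nonneg (X n), sq_nonneg (‖w n‖)]
  have hwX : ∀ n, ‖w n‖ ≤ ‖X n‖ := by
    intro n
    have h := WithLp.prod_norm_sq_eq_of_L2 (X n)
    have h1 : (X n).fst = u n := rfl
    have h2 : (X n).snd = w n := rfl
    rw [h1, h2] at h
    nlinarith [norm_nonneg (u n), norm_nonneg (w n), norm_nonneg (X n), sq_nonneg (‖u n‖)]
  have hu0 : Tendsto u atTop (𝓝 0) :=
    tendsto_zero_iff_norm_tendsto_zero.mpr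
      (squeeze_zero (fun n => norm_nonneg _) huX hXlim)
  have hw0 : Tendsto w atTop (𝓝 0) :=
    tendsto_zero_iff_norm_tendsto_zero.mpr
      (squeeze_zero (fun n => norm_nonneg _) hwX hXlim)
  -- norm one identity
  have hfg1 : ∀ n, ‖f n‖ ^ 2 + ‖g n‖ ^ 2 = 1 := by
    intro n
    have h := WithLp.prod_norm_sq_eq_of_L2
      ((WithLp.equiv 2 (H₁ × H₂)).symm (f n, g n))
    rw [hnorm n] at h
    simpa using h.symm
  have hf_le : ∀ n, ‖f n‖ ≤ 1 := by
    intro n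
    nlinarith [hfg1 n, norm_nonneg (f n), norm_nonneg (g n), sq_nonneg (‖g n‖)]
  have hg_le : ∀ n, ‖g n‖ ≤ 1 := by
    intro n
    nlinarith [hfg1 n, norm_nonneg (f n), norm_nonneg (g n), sq_nonneg (‖f n‖)]
  have hs2 : s * s = 1 := by rcases hs with h | h <;> simp [h]
  have hsconj : (starRingEnd ℂ) s = s := by rcases hs with h | h <;> simp [h]
  -- numerical range sequence
  set d : ℕ → ℂ := fun n => ⟪g n, (D l) ⟨g n, hgD n⟩⟫ with hd_def
  -- the quantity t n
  set t : ℕ → ℂ := fun n => ⟪f n, u n⟫ + (-s) * ⟪g n, w n⟫ with ht_def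
  have ht_bound : ∀ n, ‖t n‖ ≤ ‖u n‖ + ‖w n‖ := by
    intro n
    have h1 : ‖(⟪f n, u n⟫ : ℂ)‖ ≤ ‖u n‖ := by
      calc ‖(⟪f n, u n⟫ : ℂ)‖ ≤ ‖f n‖ * ‖u n‖ := norm_inner_le_norm _ _
        _ ≤ 1 * ‖u n‖ := by gcongr; exact hf_le n
        _ = ‖u n‖ := one_mul _
    have h2 : ‖(-s) * (⟪g n, w n⟫ : ℂ)‖ ≤ ‖w n‖ := by
      rw [norm_mul]
      have hns : ‖-s‖ = 1 := by rcases hs with h | h <;> simp [h]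
      rw [hns, one_mul]
      calc ‖(⟪g n, w n⟫ : ℂ)‖ ≤ ‖g n‖ * ‖w n‖ := norm_inner_le_norm _ _
        _ ≤ 1 * ‖w n‖ := by gcongr; exact hg_le n
        _ = ‖w n‖ := one_mul _
    calc ‖t n‖ ≤ ‖(⟪f n, u n⟫ : ℂ)‖ + ‖(-s) * (⟪g n, w n⟫ : ℂ)‖ := norm_add_le _ _
      _ ≤ ‖u n‖ + ‖w n‖ := add_le_add h1 h2
  -- expand t n
  have ht_eq : ∀ n, t n = ⟪f n, (A l) ⟨f n, hfA n⟩⟫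
      + (⟪f n, (B l) ⟨g n, hgB n⟩⟫ - (starRingEnd ℂ) ⟪f n, (B l) ⟨g n, hgB n⟩⟫)
      + (-s) * d n := by
    intro n
    have hγ : ⟪g n, (C l) ⟨f n, hfC n⟩⟫ = s * (starRingEnd ℂ) ⟪f n, (B l) ⟨g n, hgB n⟩⟫ := by
      rw [hadj (f n) (hfC n) (g n) (hgB n), inner_conj_symm]
    simp only [ht_def, hu_def, hw_def, inner_add_right, hd_def]
    rw [hγ]
    rcases hs with h | h <;> rw [h] <;> ring
  -- real part estimate
  set r : ℕ → ℝ := fun n => ((-s) * d n).re with hr_def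
  have hr_nonneg : ∀ n, 0 ≤ r n := by
    intro n
    have := (hsec (g n) (hgD n)).1
    rwa [inner_smul_right] at this
  have hr_le_t : ∀ n, r n ≤ (t n).re := by
    intro n
    have hacc' := hacc (f n) (hfA n)
    have hβ : (⟪f n, (B l) ⟨g n, hgB n⟩⟫ - (starRingEnd ℂ) ⟪f n, (B l) ⟨g n, hgB n⟩⟫).re = 0 := by
      rw [Complex.sub_re, Complex.conj_re, sub_self]
    have h2 : (t n).re = (⟪f n, (A l) ⟨f n, hfA n⟩⟫).re + 0 + r n := by
      rw [ht_eq n, Complex.add_re, Complex.add_re, hβ]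
    rw [h2]; linarith
  have hr0 : Tendsto r atTop (𝓝 0) := by
    apply squeeze_zero hr_nonneg (fun n => le_trans (hr_le_t n)
      (le_trans (Complex.re_le_norm _) (ht_bound n)))
    have := (tendsto_zero_iff_norm_tendsto_zero.mp hu0).add
      (tendsto_zero_iff_norm_tendsto_zero.mp hw0)
    simpa using this
  -- d n → 0
  have htan : 0 ≤ Real.tan ψ := Real.tan_nonneg_of_nonneg_of_le_pi_div_two hψ0 hψ1.le
  have hd0 : Tendsto (fun n => ‖d n‖) atTop (𝓝 0) := by
    have hdn : ∀ n, ‖d n‖ ≤ (1 + Real.tan ψ) * r n := by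
      intro n
      have hsec' := (hsec (g n) (hgD n)).2
      rw [inner_smul_right] at hsec'
      have h1 : ‖d n‖ = ‖(-s) * d n‖ := by
        rw [norm_mul]
        have : ‖-s‖ = 1 := by rcases hs with h | h <;> simp [h]
        rw [this, one_mul]
      rw [h1]
      calc ‖(-s) * d n‖ ≤ |((-s) * d n).re| + |((-s) * d n).im| :=
            Complex.norm_le_abs_re_add_abs_im _
        _ ≤ r n + Real.tan ψ * r n := by
            have : |((-s) * d n).re| = r n := abs_of_nonneg (hr_nonneg n)
            rw [this]; exact add_le_add_right hsec' _
        _ = (1 + Real.tan ψ) * r n := by ring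
    apply squeeze_zero (fun n => norm_nonneg _) hdn
    have := hr0.const_mul (1 + Real.tan ψ)
    simpa only [mul_zero] using this
  -- δ from non-membership of closure
  rw [Metric.mem_closure_iff] at hW
  push_neg at hW
  obtain ⟨δ, hδpos, hδ⟩ := hW
  have hg2 : ∀ n, ‖g n‖ ^ 2 ≤ δ⁻¹ * ‖d n‖ := by
    intro n
    by_cases hgn : g n = 0
    · have : d n = 0 := by simp [hd_def, hgn, inner_eq_zero_symm]
      simp [hgn, this]
    · have hng : 0 < ‖g n‖ := norm_pos_iff.mpr hgn
      set v : H₂ := ((‖g n‖ : ℂ))⁻¹ • g n with hv_def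
      have hvmem : v ∈ (D l).domain := Submodule.smul_mem _ _ (hgD n)
      have hvnorm : ‖v‖ = 1 := by
        rw [hv_def, norm_smul, norm_inv, Complex.norm_real, norm_norm,
          inv_mul_cancel₀ hng.ne']
      have hvz : ⟪v, (D l) ⟨v, hvmem⟩⟫ ∈ {z : ℂ | ∃ (v : H₂) (hv : v ∈ (D l).domain),
          ‖v‖ = 1 ∧ z = ⟪v, (D l) ⟨v, hv⟩⟫} := ⟨v, hvmem, hvnorm, rfl⟩
      have hlow := hδ _ hvz
      rw [dist_zero_left] at hlow
      have hDv : (D l) ⟨v, hvmem⟩ = ((‖g n‖ : ℂ))⁻¹ • (D l) ⟨g n, hgD n⟩ := by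
        have h0 : (⟨v, hvmem⟩ : (D l).domain) = ((‖g n‖ : ℂ))⁻¹ • ⟨g n, hgD n⟩ := rfl
        rw [h0, LinearPMap.map_smul]
      have hconj : (starRingEnd ℂ) ((‖g n‖ : ℂ))⁻¹ = ((‖g n‖ : ℂ))⁻¹ := by
        rw [map_inv₀, Complex.conj_ofReal]
      have hinner : ⟪v, (D l) ⟨v, hvmem⟩⟫ = ((‖g n‖ : ℂ))⁻¹ * ((‖g n‖ : ℂ))⁻¹ * d n := by
        rw [hDv, hv_def, inner_smul_left, inner_smul_right, hconj, hd_def]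
        ring
      have hnv : ‖(⟪v, (D l) ⟨v, hvmem⟩⟫ : ℂ)‖ = ‖g n‖⁻¹ * ‖g n‖⁻¹ * ‖d n‖ := by
        rw [hinner]
        simp [norm_mul, norm_inv, Complex.norm_real, norm_norm]
      have hle : δ ≤ ‖g n‖⁻¹ * ‖g n‖⁻¹ * ‖d n‖ := by rw [← hnv]; exact hlow
      have hkey : ‖g n‖⁻¹ * ‖g n‖⁻¹ * ‖d n‖ * ‖g n‖ ^ 2 = ‖d n‖ := by
        rw [sq]
        field_simp
      have h2 : δ * ‖g n‖ ^ 2 ≤ ‖d n‖ := by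
        calc δ * ‖g n‖ ^ 2 ≤ ‖g n‖⁻¹ * ‖g n‖⁻¹ * ‖d n‖ * ‖g n‖ ^ 2 :=
              mul_le_mul_of_nonneg_right hle (sq_nonneg _)
          _ = ‖d n‖ := hkey
      calc ‖g n‖ ^ 2 = δ⁻¹ * (δ * ‖g n‖ ^ 2) := by field_simp
        _ ≤ δ⁻¹ * ‖d n‖ := by gcongr
  have hgto0 : Tendsto (fun n => ‖g n‖) atTop (𝓝 0) := by
    have hsq : Tendsto (fun n => ‖g n‖ ^ 2) atTop (𝓝 0) := by
      apply squeeze_zero (fun n => sq_nonneg _) hg2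
      have := hd0.const_mul δ⁻¹
      simpa using this
    have := hsq.sqrt
    simpa [Real.sqrt_sq (norm_nonneg _)] using this
  have hfto1 : Tendsto (fun n => ‖f n‖) atTop (𝓝 1) := by
    have h1 : Tendsto (fun n => ‖f n‖ ^ 2) atTop (𝓝 1) := by
      have h2 : Tendsto (fun n => 1 - ‖g n‖ ^ 2) atTop (𝓝 1) := by
        have := (tendsto_const_nhds (x := (1:ℝ)) (f := atTop)).sub
          ((hgto0.pow 2))
        simpa using this
      apply h2.congr
      intro n; linarith [hfg1 n]
    have := h1.sqrt
    simpa [Real.sqrt_sq (norm_nonneg _)] using this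
  -- the Schur complement sequence before normalization
  have hmemD : ∀ h : H₂, RD h ∈ (D l).domain := fun h => (hRD.2 h).choose
  have hDRD : ∀ h : H₂, (D l) ⟨RD h, hmemD h⟩ = h := fun h => (hRD.2 h).choose_spec
  have hmemB : ∀ h : H₂, RD h ∈ (B l).domain := fun h => hDB (hmemD h)
  set P : ℕ → H₁ := fun n => (A l) ⟨f n, hfA n⟩
      - (B l) ⟨RD ((C l) ⟨f n, hfC n⟩), hmemB _⟩ with hP_def
  have hP_eq : ∀ n, P n = u n - (B l) ⟨RD (w n), hmemB _⟩ := by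
    intro n
    have hC : (C l) ⟨f n, hfC n⟩ = w n - (D l) ⟨g n, hgD n⟩ := by
      simp [hw_def]
    have hRDC : RD ((C l) ⟨f n, hfC n⟩) = RD (w n) - g n := by
      rw [hC, map_sub]
      congr 1
      exact hRD.1 ⟨g n, hgD n⟩
    have hBsub : (B l) ⟨RD ((C l) ⟨f n, hfC n⟩), hmemB _⟩
        = (B l) ⟨RD (w n), hmemB _⟩ - (B l) ⟨g n, hgB n⟩ := by
      have hsub : (⟨RD ((C l) ⟨f n, hfC n⟩), hmemB _⟩ : (B l).domain)
          = (⟨RD (w n), hmemB _⟩ : (B l).domain) - ⟨g n, hgB n⟩ := by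
        apply Subtype.ext
        simpa using hRDC
      rw [hsub, LinearPMap.map_sub]
    rw [hP_def]
    simp only [hBsub, hu_def]
    abel
  have hP0 : Tendsto P atTop (𝓝 0) := by
    obtain ⟨a, b, ha, hb, hab⟩ := hBbd
    have hq : ∀ n, ‖(B l) ⟨RD (w n), hmemB _⟩‖ ≤ (a * ‖RD‖ + b) * ‖w n‖ := by
      intro n
      have h1 := hab (RD (w n)) (hmemD _)
      have h2 : (B l) ⟨RD (w n), hDB (hmemD (w n))⟩ = (B l) ⟨RD (w n), hmemB _⟩ := rfl
      rw [h2, hDRD] at h1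
      calc ‖(B l) ⟨RD (w n), hmemB _⟩‖ ≤ a * ‖RD (w n)‖ + b * ‖w n‖ := h1
        _ ≤ a * (‖RD‖ * ‖w n‖) + b * ‖w n‖ := by
            gcongr; exact RD.le_opNorm _
        _ = (a * ‖RD‖ + b) * ‖w n‖ := by ring
    have hq0 : Tendsto (fun n => (B l) ⟨RD (w n), hmemB _⟩) atTop (𝓝 0) := by
      apply tendsto_zero_iff_norm_tendsto_zero.mpr
      apply squeeze_zero (fun n => norm_nonneg _) hq
      have := (tendsto_zero_iff_norm_tendsto_zero.mp hw0).const_mul (a * ‖RD‖ + b)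
      simpa using this
    have := hu0.sub hq0
    simp only [sub_zero] at this
    apply this.congr
    intro n
    exact (hP_eq n).symm
  -- find N with ‖f m‖ ≥ 1/2 for m ≥ N
  have hev : ∀ᶠ n in atTop, (1:ℝ)/2 < ‖f n‖ :=
    hfto1.eventually (eventually_gt_nhds (by norm_num))
  obtain ⟨N, hN⟩ := eventually_atTop.mp hev
  -- the normalized sequence
  refine ⟨fun n => ((‖f (n + N)‖ : ℂ))⁻¹ • f (n + N),
    fun n => Submodule.smul_mem _ _ (hfA (n + N)),
    fun n => Submodule.smul_mem _ _ (hfC (n + N)),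
    fun n => hmemB _, ?_, ?_⟩
  · intro n
    have hpos : (0:ℝ) < ‖f (n + N)‖ := lt_trans (by norm_num) (hN (n + N) (Nat.le_add_left N n))
    rw [norm_smul, norm_inv, Complex.norm_real, norm_norm, inv_mul_cancel₀ hpos.ne']
  · -- show equal to c • P (n+N) and take limit
    have key : ∀ n, (A l) ⟨((‖f (n + N)‖ : ℂ))⁻¹ • f (n + N), Submodule.smul_mem _ _ (hfA (n + N))⟩
        - (B l) ⟨RD ((C l) ⟨((‖f (n + N)‖ : ℂ))⁻¹ • f (n + N), Submodule.smul_mem _ _ (hfC (n + N))⟩), hmemB _⟩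
        = ((‖f (n + N)‖ : ℂ))⁻¹ • P (n + N) := by
      intro n
      set c : ℂ := ((‖f (n + N)‖ : ℂ))⁻¹ with hc_def
      have hA : (A l) ⟨c • f (n + N), Submodule.smul_mem _ _ (hfA (n + N))⟩
          = c • (A l) ⟨f (n + N), hfA (n + N)⟩ := by
        have : (⟨c • f (n + N), Submodule.smul_mem _ _ (hfA (n + N))⟩ : (A l).domain)
            = c • ⟨f (n + N), hfA (n + N)⟩ := rfl
        rw [this, LinearPMap.map_smul]
      have hC : (C l) ⟨c • f (n + N), Submodule.smul_mem _ _ (hfC (n + N))⟩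
          = c • (C l) ⟨f (n + N), hfC (n + N)⟩ := by
        have : (⟨c • f (n + N), Submodule.smul_mem _ _ (hfC (n + N))⟩ : (C l).domain)
            = c • ⟨f (n + N), hfC (n + N)⟩ := rfl
        rw [this, LinearPMap.map_smul]
      have hBs : (B l) ⟨RD ((C l) ⟨c • f (n + N), Submodule.smul_mem _ _ (hfC (n + N))⟩), hmemB _⟩
          = c • (B l) ⟨RD ((C l) ⟨f (n + N), hfC (n + N)⟩), hmemB _⟩ := by
        have h1 : (⟨RD ((C l) ⟨c • f (n + N), Submodule.smul_mem _ _ (hfC (n + N))⟩), hmemB _⟩ : (B l).domain)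
            = c • ⟨RD ((C l) ⟨f (n + N), hfC (n + N)⟩), hmemB _⟩ := by
          apply Subtype.ext
          simp [hC, map_smul]
        rw [h1, LinearPMap.map_smul]
      rw [hA, hBs, hP_def, smul_sub]
    have hPlim : Tendsto (fun n => ((‖f (n + N)‖ : ℂ))⁻¹ • P (n + N)) atTop (𝓝 0) := by
      apply tendsto_zero_iff_norm_tendsto_zero.mpr
      have hb : ∀ n, ‖((‖f (n + N)‖ : ℂ))⁻¹ • P (n + N)‖ ≤ 2 * ‖P (n + N)‖ := by
        intro n
        have hpos : (1:ℝ)/2 < ‖f (n + N)‖ := hN (n + N) (Nat.le_add_left N n)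
        rw [norm_smul, norm_inv, Complex.norm_real, norm_norm]
        have h2 : ‖f (n + N)‖⁻¹ ≤ 2 := by
          rw [inv_le_comm₀ (by linarith) (by norm_num)]
          linarith
        exact mul_le_mul_of_nonneg_right h2 (norm_nonneg _)
      apply squeeze_zero (fun n => norm_nonneg _) hb
      have hP0' : Tendsto (fun n => ‖P (n + N)‖) atTop (𝓝 0) :=
        (tendsto_zero_iff_norm_tendsto_zero.mp hP0).comp (tendsto_add_atTop_nat N)
      have := hP0'.const_mul 2
      simpa using this
    apply hPlim.congr
    intro n
    exact (key n).symm

end
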